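/- Let θ₁ and θ₂ be real numbers with θ₁ ≠ θ₂, let γ > 0, and let θ̂₁, θ̂₂ be independent real-valued random variables with θ̂₁ ~ N(θ₁, γ²) and θ̂₂ ~ N(θ₂, γ²). Let W : ℝ × ℝ → ℝ be a measurable function such that for almost every realization (x, y) of (θ̂₁, θ̂₂), the value W(x, y) is a local minimum of the function w ↦ (1/2)σ((w−x)²) + (1/2)σ((w−y)²). Then the expected GM-Appeal of W satisfies E[(1/2)(𝟙{(W(θ̂₁,θ̂₂)−θ₁)² < (θ̂₁−θ₁)²} + 𝟙{(W(θ̂₁,θ̂₂)−θ₂)² < (θ̂₂−θ₂)²})] ≥ (1/16)·exp(−1/γ²). -/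

import Mathlib

set_option maxHeartbeats 1000000

open MeasureTheory ProbabilityTheory Set
open Real hiding sigmoid
open scoped NNReal ENNReal

noncomputable def sigmoid (x : ℝ) : ℝ := 1 / (1 + Real.exp (-x))


noncomputable def gg (t : ℝ) : ℝ := exp (-t) / (1 + exp (-t))^2
noncomputable def hh (u : ℝ) : ℝ := u * gg (u^2)

lemma one_add_exp_pos (t : ℝ) : 0 < 1 + exp (-t) := by positivity

lemma gg_pos (t : ℝ) : 0 < gg t := by unfold gg; positivity

lemma sigmoid_hasDerivAt (t : ℝ) : HasDerivAt sigmoid (gg t) t := by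
  have h1 : HasDerivAt (fun x : ℝ => 1 + exp (-x)) (-exp (-t)) t := by
    simpa using (((hasDerivAt_id t).neg).exp.const_add 1)
  have h2 := h1.fun_inv (one_add_exp_pos t).ne'
  have h3 : sigmoid = fun x : ℝ => (1 + exp (-x))⁻¹ := by
    funext z; simp [sigmoid, one_div]
  rw [h3]
  simpa [gg] using h2

lemma F_hasDerivAt (x y w : ℝ) :
    HasDerivAt (fun w : ℝ => (1/2) * sigmoid ((w - x)^2) + (1/2) * sigmoid ((w - y)^2))
      (hh (w - x) + hh (w - y)) w := by
  have k : ∀ a : ℝ, HasDerivAt (fun w : ℝ => (1/2) * sigmoid ((w - a)^2)) (hh (w - a)) w := by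
    intro a
    have h1 : HasDerivAt (fun w : ℝ => (w - a)^2) (2 * (w - a)) w := by
      simpa using ((hasDerivAt_id w).sub_const a).fun_pow 2
    have := ((sigmoid_hasDerivAt ((w - a)^2)).comp w h1).const_mul (1/2 : ℝ)
    refine this.congr_deriv ?_
    unfold hh; ring
  exact (k x).add (k y)

lemma hh_odd (u : ℝ) : hh (-u) = - hh u := by simp [hh]

lemma hh_neg_of_neg {u : ℝ} (h : u < 0) : hh u < 0 :=
  mul_neg_of_neg_of_pos h (gg_pos _)

lemma hh_nonpos_of_nonpos {u : ℝ} (h : u ≤ 0) : hh u ≤ 0 :=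
  mul_nonpos_of_nonpos_of_nonneg h (gg_pos _).le

noncomputable def ggd (t : ℝ) : ℝ :=
  -exp (-t) / (1 + exp (-t))^2 + 2 * exp (-t)^2 / (1 + exp (-t))^3

lemma gg_hasDerivAt (t : ℝ) : HasDerivAt gg (ggd t) t := by
  have h1 : HasDerivAt (fun s : ℝ => exp (-s)) (-exp (-t)) t := by
    simpa using ((hasDerivAt_id t).neg).exp
  have h2 : HasDerivAt (fun s : ℝ => (1 + exp (-s))^2) (2 * (1 + exp (-t)) * (-exp (-t))) t := by
    simpa using ((h1.const_add 1).fun_pow 2)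
  have h3 := h1.fun_div h2 (by positivity)
  have : HasDerivAt gg ((-exp (-t) * (1 + exp (-t))^2 - exp (-t) * (2 * (1 + exp (-t)) * (-exp (-t)))) / ((1 + exp (-t))^2)^2) t := by
    exact h3
  refine this.congr_deriv ?_
  have hp : (0:ℝ) < 1 + exp (-t) := one_add_exp_pos t
  unfold ggd
  field_simp [ggd]
  ring

lemma hh_hasDerivAt (u : ℝ) : HasDerivAt hh (gg (u^2) + 2*u^2 * ggd (u^2)) u := by
  have h1 : HasDerivAt (fun v : ℝ => v^2) (2*u) u := by simpa using (hasDerivAt_id u).fun_pow 2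
  have h2 : HasDerivAt (fun v : ℝ => gg (v^2)) (ggd (u^2) * (2*u)) u :=
    by have := (gg_hasDerivAt (u^2)).comp u h1; exact this
  have h3 := (hasDerivAt_id u).fun_mul h2
  have hdef : hh = fun v : ℝ => v * gg (v^2) := rfl
  rw [hdef]
  refine h3.congr_deriv ?_; simp; ring

lemma hh_deriv_neg {u : ℝ} (hu : 1.03 ≤ u) : gg (u^2) + 2*u^2 * ggd (u^2) < 0 := by
  set t := u^2 with ht
  have ht' : 1.0609 ≤ t := by nlinarith
  set E := exp (-t) with hE
  have hEpos : 0 < E := exp_pos _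
  have hE1 : E ≤ 0.3468 := by
    have h1 : (2.7182818 : ℝ) < exp 1 := by
      have := Real.exp_one_gt_d9; linarith
    have h15 := Real.add_one_le_exp (0.0609 : ℝ)
    have h2 : (2.8838 : ℝ) ≤ exp 1.0609 := by
      calc (2.8838:ℝ) ≤ 2.7182818 * (1 + 0.0609) := by norm_num
        _ ≤ exp 1 * exp 0.0609 := by
            apply mul_le_mul h1.le (by linarith) (by norm_num) (exp_pos 1).le
        _ = exp 1.0609 := by rw [← exp_add]; norm_num
    have h3 : exp (-t) ≤ exp (-1.0609) := exp_le_exp.mpr (by linarith)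
    have h4 : exp (-1.0609) = (exp 1.0609)⁻¹ := by rw [← exp_neg]
    have h5 : (exp 1.0609)⁻¹ ≤ (2.8838:ℝ)⁻¹ := by
      apply inv_anti₀ (by norm_num) h2
    rw [hE]
    calc exp (-t) ≤ (2.8838:ℝ)⁻¹ := by rw [h4] at h3; linarith
      _ ≤ 0.3468 := by norm_num
  have key : (1 + E) < 2 * t * (1 - E) := by nlinarith
  have hp : 0 < 1 + E := by linarith
  have factored : gg t + 2*t * ggd t = E / (1+E)^3 * ((1+E) + 2*t*(E - 1)) := by
    rw [gg, ggd, ← hE]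
    field_simp
    ring
  rw [factored]
  apply mul_neg_of_pos_of_neg (by positivity)
  nlinarith

lemma hh_strictAntiOn : StrictAntiOn hh (Ici (1.03:ℝ)) := by
  apply strictAntiOn_of_deriv_neg (convex_Ici _)
  · exact fun u _ => (hh_hasDerivAt u).continuousAt.continuousWithinAt
  · intro u hu
    rw [interior_Ici] at hu
    rw [(hh_hasDerivAt u).deriv]
    exact hh_deriv_neg (le_of_lt hu)

lemma main_det (x y w : ℝ) (hxy : x < y)
    (hmin : IsLocalMin (fun w : ℝ => (1/2) * sigmoid ((w - x)^2) + (1/2) * sigmoid ((w - y)^2)) w) :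
    x < w ∧ w < y ∧ (w < x + 1.04 ∨ y - 1.04 < w) := by
  set F := fun w : ℝ => (1/2) * sigmoid ((w - x)^2) + (1/2) * sigmoid ((w - y)^2) with hF
  have hd0 : hh (w - x) + hh (w - y) = 0 := by
    have := hmin.deriv_eq_zero
    rwa [(F_hasDerivAt x y w).deriv] at this
  have hxw : x < w := by
    by_contra h
    push_neg at h
    have h1 : hh (w - x) ≤ 0 := hh_nonpos_of_nonpos (by linarith)
    have h2 : hh (w - y) < 0 := hh_neg_of_neg (by linarith)
    linarith
  have hwy : w < y := by
    by_contra h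
    push_neg at h
    have h1 : (0:ℝ) ≤ hh (w - y) := by
      rcases eq_or_lt_of_le h with h'|h'
      · simp [← h', hh]
      · have := hh_neg_of_neg (u := -(w - y)) (by linarith)
        rw [hh_odd] at this; linarith
    have h2 : 0 < hh (w - x) := by
      have := hh_neg_of_neg (u := -(w - x)) (by linarith)
      rw [hh_odd] at this; linarith
    linarith
  refine ⟨hxw, hwy, ?_⟩
  by_contra hmid
  push_neg at hmid
  obtain ⟨ha, hb⟩ := hmid
  -- a = w - x ≥ 1.04, b = y - w ≥ 1.04
  have ha' : 1.04 ≤ w - x := by linarith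
  have hb' : 1.04 ≤ y - w := by linarith
  have heq : hh (w - x) = hh (y - w) := by
    have : hh (w - y) = - hh (y - w) := by rw [← hh_odd]; ring_nf
    linarith
  -- derivative positive on Ioo (w - δ) w with δ = (w - x) - 1.03
  obtain ⟨δ, hδ⟩ : ∃ δ:ℝ, δ = w - x - 1.03 := ⟨_, rfl⟩
  have hδpos : 0 < δ := by rw [hδ]; linarith
  have hderivpos : ∀ z ∈ Ioo (w - δ) w, 0 < hh (z - x) + hh (z - y) := by
    intro z hz
    obtain ⟨hz1, hz2⟩ := hz
    have hzx : z - x ∈ Ici (1.03:ℝ) := by simp; linarith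
    have h1 : hh (w - x) < hh (z - x) :=
      hh_strictAntiOn hzx (by simp; linarith) (by linarith)
    have h2 : hh (y - z) < hh (y - w) := by
      apply hh_strictAntiOn (by simp; linarith) (by simp; linarith) (by linarith)
    have h3 : hh (z - y) = - hh (y - z) := by rw [← hh_odd]; ring_nf
    rw [h3]
    rw [heq] at h1
    linarith
  have hmono : StrictMonoOn F (Icc (w - δ) w) := by
    apply strictMonoOn_of_deriv_pos (convex_Icc _ _)
    · exact fun u _ => (F_hasDerivAt x y u).continuousAt.continuousWithinAt
    · intro z hz
      rw [interior_Icc] at hz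
      rw [(F_hasDerivAt x y z).deriv]
      exact hderivpos z hz
  -- contradiction with local min
  obtain ⟨ε, hε, hball⟩ := Metric.eventually_nhds_iff.mp hmin
  obtain ⟨z, hzdef⟩ : ∃ z:ℝ, z = w - min δ ε / 2 := ⟨_, rfl⟩
  have hmin' : 0 < min δ ε := lt_min hδpos hε
  have hmd : min δ ε ≤ δ := min_le_left _ _
  have hme : min δ ε ≤ ε := min_le_right _ _
  have hz1 : z ∈ Icc (w - δ) w := by
    constructor
    · rw [hzdef]; linarith
    · rw [hzdef]; linarith
  have hzlt : z < w := by rw [hzdef]; linarith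
  have hFlt : F z < F w := hmono hz1 ⟨by linarith, le_refl w⟩ hzlt
  have : F w ≤ F z := by
    apply hball
    rw [hzdef, Real.dist_eq]
    rw [show w - min δ ε / 2 - w = -(min δ ε / 2) by ring, abs_neg,
      abs_of_pos (by linarith)]
    linarith
  linarith


variable {γ : ℝ}

-- symmetry of gaussian about mean
lemma gauss_map_reflect (θ : ℝ) (v : ℝ≥0) :
    Measure.map (fun x : ℝ => 2*θ - x) (gaussianReal θ v) = gaussianReal θ v := by
  have h1 : (fun x : ℝ => 2*θ - x) = (fun x : ℝ => x + 2*θ) ∘ (fun x : ℝ => (-1) * x) := by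
    funext x; simp; ring
  rw [h1, ← Measure.map_map (by fun_prop) (by fun_prop)]
  rw [gaussianReal_map_const_mul (-1)]
  have h2 : (NNReal.mk ((-1:ℝ)^2) (sq_nonneg _)) = 1 := by ext; norm_num
  rw [h2, one_mul, gaussianReal_map_add_const]
  congr 1; ring

lemma gauss_Ioi_eq_Iio (θ s : ℝ) (v : ℝ≥0) :
    gaussianReal θ v (Ioi (θ + s)) = gaussianReal θ v (Iio (θ - s)) := by
  conv_lhs => rw [← gauss_map_reflect θ v]
  rw [Measure.map_apply (by fun_prop) measurableSet_Ioi]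
  congr 1
  ext x
  simp only [mem_preimage, mem_Ioi, mem_Iio]
  constructor <;> intro h <;> linarith

lemma gauss_Iio_half (θ : ℝ) {v : ℝ≥0} (hv : v ≠ 0) :
    gaussianReal θ v (Iio θ) = 1/2 := by
  have hsym : gaussianReal θ v (Ioi θ) = gaussianReal θ v (Iio θ) := by
    simpa using gauss_Ioi_eq_Iio θ 0 v
  have hpt : gaussianReal θ v {θ} = 0 :=
    gaussianReal_absolutelyContinuous θ hv (measure_singleton θ)
  have huniv : gaussianReal θ v (Iio θ) + (gaussianReal θ v {θ} + gaussianReal θ v (Ioi θ)) = 1 := by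
    rw [← measure_union (by rw [Set.disjoint_left]; intro a ha; simp at ha ⊢; simp [ha]) measurableSet_Ioi,
      ← measure_union (by rw [Set.disjoint_left]; intro a ha hb; simp at ha hb; linarith) ((measurableSet_singleton θ).union measurableSet_Ioi),
      show Iio θ ∪ ({θ} ∪ Ioi θ) = univ from by
        rw [show ({θ} ∪ Ioi θ) = Ici θ from by ext z; simp [eq_comm, le_iff_lt_or_eq, or_comm], Iio_union_Ici]]
    simp
  rw [hpt, zero_add, hsym] at huniv
  have hfin : gaussianReal θ v (Iio θ) ≠ ⊤ := measure_ne_top _ _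
  -- from a + a = 1 conclude a = 1/2
  have : (2:ℝ≥0∞) * gaussianReal θ v (Iio θ) = 1 := by rw [two_mul]; exact huniv
  have h2' := ENNReal.toReal_eq_one_iff _ |>.mpr this
  rw [ENNReal.toReal_mul] at h2'
  have hx : (gaussianReal θ v (Iio θ)).toReal = 1/2 := by
    have : (2:ℝ≥0∞).toReal = 2 := by norm_num
    rw [this] at h2'; linarith
  have : ((1:ℝ≥0∞)/2).toReal = 1/2 := by norm_num
  apply (ENNReal.toReal_eq_toReal_iff' hfin (by norm_num)).mp
  rw [hx, this]

lemma sqrt2piV (hγ : 0 < γ) : Real.sqrt (2*π*((γ^2).toNNReal : ℝ≥0)) = γ * Real.sqrt (2*π) := by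
  rw [Real.coe_toNNReal _ (sq_nonneg γ)]
  rw [mul_comm (2*π) (γ^2), Real.sqrt_mul (sq_nonneg γ), Real.sqrt_sq hγ.le]

lemma Vg_ne (hγ : 0 < γ) : (γ^2).toNNReal ≠ 0 := by
  simp [Real.toNNReal_eq_zero, not_le]
  positivity

lemma tail_rect (hγ : 0 < γ) (θ : ℝ) :
    (Real.sqrt (2*π))⁻¹ * exp (-(0.52+γ)^2/(2*γ^2))
      ≤ ∫ x in Iio (θ - 0.52), gaussianPDFReal θ (γ^2).toNNReal x := by
  have hpos : (0:ℝ) < Real.sqrt (2*π) := Real.sqrt_pos.mpr (by positivity)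
  have key1 : ∫ x in Ioo (θ - 0.52 - γ) (θ - 0.52), gaussianPDFReal θ (γ^2).toNNReal x
      ≤ ∫ x in Iio (θ - 0.52), gaussianPDFReal θ (γ^2).toNNReal x := by
    apply setIntegral_mono_set (integrable_gaussianPDFReal _ _).integrableOn
      (ae_of_all _ fun x => gaussianPDFReal_nonneg _ _ x)
    exact HasSubset.Subset.eventuallyLE (fun z hz => hz.2)
  refine le_trans ?_ key1
  have key2 : ∫ _x in Ioo (θ - 0.52 - γ) (θ - 0.52),
        ((γ * Real.sqrt (2*π))⁻¹ * exp (-(0.52+γ)^2/(2*γ^2)))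
      ≤ ∫ x in Ioo (θ - 0.52 - γ) (θ - 0.52), gaussianPDFReal θ (γ^2).toNNReal x := by
    apply setIntegral_mono_on
    · exact integrableOn_const measure_Ioo_lt_top.ne
    · exact (integrable_gaussianPDFReal _ _).integrableOn
    · exact measurableSet_Ioo
    · intro x hx
      rw [gaussianPDFReal, sqrt2piV hγ, Real.coe_toNNReal _ (sq_nonneg γ)]
      have hsq : (x - θ)^2 ≤ (0.52+γ)^2 := by nlinarith [hx.1, hx.2]
      gcongr
  refine le_trans (le_of_eq ?_) key2
  rw [setIntegral_const, measureReal_def, Real.volume_Ioo, show θ - 0.52 - (θ - 0.52 - γ) = γ by ring,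
    ENNReal.toReal_ofReal hγ.le]
  rw [smul_eq_mul, mul_inv]
  field_simp

lemma half_real (hγ : 0 < γ) (θ : ℝ) :
    ∫ x in Iio θ, gaussianPDFReal θ (γ^2).toNNReal x = 1/2 := by
  have h := gauss_Iio_half θ (Vg_ne hγ)
  rw [gaussianReal_apply_eq_integral _ (Vg_ne hγ)] at h
  have h2 := congrArg ENNReal.toReal h
  rw [ENNReal.toReal_ofReal (setIntegral_nonneg measurableSet_Iio
    (fun x _ => gaussianPDFReal_nonneg _ _ x))] at h2
  rw [h2]
  norm_num

lemma tail_half (hγ : 0 < γ) (θ : ℝ) :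
    1/2 - 0.52 * (γ * Real.sqrt (2*π))⁻¹
      ≤ ∫ x in Iio (θ - 0.52), gaussianPDFReal θ (γ^2).toNNReal x := by
  have hpos : (0:ℝ) < Real.sqrt (2*π) := Real.sqrt_pos.mpr (by positivity)
  have hsplit : (∫ x in Iio (θ - 0.52), gaussianPDFReal θ (γ^2).toNNReal x)
      + (∫ x in Ico (θ - 0.52) θ, gaussianPDFReal θ (γ^2).toNNReal x)
      = ∫ x in Iio θ, gaussianPDFReal θ (γ^2).toNNReal x := by
    rw [← setIntegral_union ?_ measurableSet_Ico
      (integrable_gaussianPDFReal _ _).integrableOn (integrable_gaussianPDFReal _ _).integrableOn]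
    · rw [Iio_union_Ico_eq_Iio (by linarith)]
    · rw [Set.disjoint_left]; intro a ha hb; exact absurd hb.1 (not_le.mpr ha)
  have hstrip : ∫ x in Ico (θ - 0.52) θ, gaussianPDFReal θ (γ^2).toNNReal x
      ≤ 0.52 * (γ * Real.sqrt (2*π))⁻¹ := by
    have : ∫ x in Ico (θ - 0.52) θ, gaussianPDFReal θ (γ^2).toNNReal x
        ≤ ∫ _x in Ico (θ - 0.52) θ, (γ * Real.sqrt (2*π))⁻¹ := by
      apply setIntegral_mono_on (integrable_gaussianPDFReal _ _).integrableOn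
        (integrableOn_const measure_Ico_lt_top.ne) measurableSet_Ico
      intro x _
      rw [gaussianPDFReal, sqrt2piV hγ, Real.coe_toNNReal _ (sq_nonneg γ)]
      calc (γ * Real.sqrt (2*π))⁻¹ * exp (-(x - θ)^2 / (2*γ^2))
          ≤ (γ * Real.sqrt (2*π))⁻¹ * 1 := by
            apply mul_le_mul_of_nonneg_left _ (by positivity)
            rw [← Real.exp_zero]
            apply exp_le_exp.mpr
            exact div_nonpos_of_nonpos_of_nonneg (neg_nonpos_of_nonneg (sq_nonneg _)) (by positivity)
        _ = (γ * Real.sqrt (2*π))⁻¹ := mul_one _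
    refine le_trans this (le_of_eq ?_)
    rw [setIntegral_const, measureReal_def, Real.volume_Ico, show θ - (θ - 0.52) = 0.52 by ring,
      ENNReal.toReal_ofReal (by norm_num), smul_eq_mul]
  have hhalf := half_real hγ θ
  rw [hhalf] at hsplit
  linarith

lemma num_combine (hγ : 0 < γ) (p q : ℝ)
    (hp1 : (Real.sqrt (2*π))⁻¹ * exp (-(0.52+γ)^2/(2*γ^2)) ≤ p)
    (hp2 : 1/2 - 0.52 * (γ * Real.sqrt (2*π))⁻¹ ≤ p)
    (hq1 : (Real.sqrt (2*π))⁻¹ * exp (-(0.52+γ)^2/(2*γ^2)) ≤ q)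
    (hq2 : 1/2 - 0.52 * (γ * Real.sqrt (2*π))⁻¹ ≤ q) :
    (1/8) * exp (-1/γ^2) ≤ p * q := by
  have hpos : (0:ℝ) < Real.sqrt (2*π) := Real.sqrt_pos.mpr (by positivity)
  have hsq : Real.sqrt (2*π) * Real.sqrt (2*π) = 2*π := Real.mul_self_sqrt (by positivity)
  rcases le_or_gt γ (1/2) with hc | hc
  · -- small gamma : rectangle bound
    set r := (Real.sqrt (2*π))⁻¹ * exp (-(0.52+γ)^2/(2*γ^2)) with hr
    have hr0 : 0 < r := by positivity
    have hpq : r * r ≤ p * q :=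
      mul_le_mul hp1 hq1 hr0.le (le_trans hr0.le hp1)
    have hrr : r * r = (2*π)⁻¹ * exp (-(0.52+γ)^2/γ^2) := by
      have h0 : r * r = ((Real.sqrt (2*π))⁻¹*(Real.sqrt (2*π))⁻¹)
          * (exp (-(0.52+γ)^2/(2*γ^2)) * exp (-(0.52+γ)^2/(2*γ^2))) := by rw [hr]; ring
      rw [h0, ← exp_add, ← mul_inv, hsq,
        show -(0.52+γ)^2/(2*γ^2) + -(0.52+γ)^2/(2*γ^2) = -(0.52+γ)^2/γ^2 from by
          field_simp; ring]
    refine le_trans ?_ hpq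
    rw [hrr]
    have hexp : exp (-(0.52+γ)^2/γ^2) = exp ((1-(0.52+γ)^2)/γ^2) * exp (-1/γ^2) := by
      rw [← exp_add]; congr 1; field_simp; ring
    rw [hexp, ← mul_assoc]
    apply mul_le_mul_of_nonneg_right _ (exp_pos _).le
    have he1 : (-0.1616:ℝ) ≤ (1-(0.52+γ)^2)/γ^2 := by
      rw [le_div_iff₀ (by positivity)]
      nlinarith [mul_nonneg (sub_nonneg.mpr hc) hγ.le]
    have he2 : (0.8384:ℝ) ≤ exp ((1-(0.52+γ)^2)/γ^2) := by
      calc (0.8384:ℝ) = 1 + (-0.1616) := by norm_num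
        _ ≤ exp (-0.1616) := Real.add_one_le_exp _ |>.trans_eq' (by ring)
        _ ≤ _ := exp_le_exp.mpr he1
    have hpi : π < 3.15 := pi_lt_d2
    calc (1/8:ℝ) ≤ (2*π)⁻¹ * 0.8384 := by
          rw [le_inv_mul_iff₀ (by positivity)]
          nlinarith
      _ ≤ (2*π)⁻¹ * exp ((1-(0.52+γ)^2)/γ^2) :=
          mul_le_mul_of_nonneg_left he2 (by positivity)
  · -- large gamma : half bound
    have hsqrt_ge : (2.5061:ℝ) ≤ Real.sqrt (2*π) := by
      rw [show (2.5061:ℝ) = Real.sqrt (2.5061^2) from (Real.sqrt_sq (by norm_num)).symm]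
      apply Real.sqrt_le_sqrt
      nlinarith [pi_gt_d6]
    have hb : 1/2 - 0.2075/γ ≤ 1/2 - 0.52 * (γ * Real.sqrt (2*π))⁻¹ := by
      have hs' : (0:ℝ) < 2.5061 := by norm_num
      have h1 : 0.52 * (γ * Real.sqrt (2*π))⁻¹ ≤ 0.2075/γ := by
        rw [mul_inv, div_eq_mul_inv]
        have hle : (Real.sqrt (2*π))⁻¹ ≤ (2.5061:ℝ)⁻¹ := by
          apply inv_anti₀ hs' hsqrt_ge
        have hγi : (0:ℝ) < γ⁻¹ := inv_pos.mpr hγ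
        calc 0.52 * (γ⁻¹ * (Real.sqrt (2*π))⁻¹) ≤ 0.52 * (γ⁻¹ * (2.5061:ℝ)⁻¹) := by
              apply mul_le_mul_of_nonneg_left _ (by norm_num)
              exact mul_le_mul_of_nonneg_left hle hγi.le
          _ ≤ 0.2075 * γ⁻¹ := by
              rw [show γ⁻¹ * (2.5061:ℝ)⁻¹ = γ⁻¹ / 2.5061 by ring, mul_div_assoc']
              rw [div_le_iff₀ hs']
              have : (0.52:ℝ) ≤ 0.2075 * 2.5061 := by norm_num
              nlinarith
      linarith
    have hb0 : 0 < 1/2 - 0.2075/γ := by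
      rw [sub_pos, div_lt_iff₀ hγ]
      linarith
    have hp' : 1/2 - 0.2075/γ ≤ p := le_trans hb hp2
    have hq' : 1/2 - 0.2075/γ ≤ q := le_trans hb hq2
    have hpq : (1/2 - 0.2075/γ) * (1/2 - 0.2075/γ) ≤ p * q :=
      mul_le_mul hp' hq' hb0.le (le_trans hb0.le hp')
    refine le_trans ?_ hpq
    have hu : (0:ℝ) ≤ 1/γ^2 := by positivity
    have hsum := Real.sum_le_exp_of_nonneg hu 4
    have hP : 1 + 1/γ^2 + (1/γ^2)^2/2 + (1/γ^2)^3/6 ≤ exp (1/γ^2) := by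
      refine le_trans (le_of_eq ?_) hsum
      rw [Finset.sum_range_succ, Finset.sum_range_succ, Finset.sum_range_succ,
        Finset.sum_range_succ, Finset.sum_range_zero]
      norm_num [Nat.factorial]
    have hPpos : (0:ℝ) < 1 + 1/γ^2 + (1/γ^2)^2/2 + (1/γ^2)^3/6 := by positivity
    have hinv : exp (-1/γ^2) ≤ (1 + 1/γ^2 + (1/γ^2)^2/2 + (1/γ^2)^3/6)⁻¹ := by
      rw [show (-1/γ^2 : ℝ) = -(1/γ^2) by ring, exp_neg]
      exact inv_anti₀ hPpos hP
    have hQ : (0:ℝ) < 6*γ^6+6*γ^4+3*γ^2+1 := by positivity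
    have hPeq : 1 + 1/γ^2 + (1/γ^2)^2/2 + (1/γ^2)^3/6 = (6*γ^6+6*γ^4+3*γ^2+1)/(6*γ^6) := by
      field_simp; ring
    have key : 6*γ^8 ≤ 8*(γ/2 - 0.2075)^2*(6*γ^6+6*γ^4+3*γ^2+1) := by
      nlinarith [sq_nonneg (γ - 1/2), sq_nonneg γ, sq_nonneg (γ^2 - 1/2),
        sq_nonneg (γ^3 - γ), pow_pos hγ 6, sq_nonneg (γ^4 - γ^2)]
    calc (1/8) * exp (-1/γ^2) ≤ (1/8) * (1 + 1/γ^2 + (1/γ^2)^2/2 + (1/γ^2)^3/6)⁻¹ :=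
          mul_le_mul_of_nonneg_left hinv (by norm_num)
      _ ≤ (1/2 - 0.2075/γ) * (1/2 - 0.2075/γ) := by
          have hγne : γ ≠ 0 := ne_of_gt hγ
          have hA : 1/8 ≤ (1/2 - 0.2075/γ) * (1/2 - 0.2075/γ)
              * (1 + 1/γ^2 + (1/γ^2)^2/2 + (1/γ^2)^3/6) := by
            have expand : (1/2 - 0.2075/γ) * (1/2 - 0.2075/γ)
                  * (1 + 1/γ^2 + (1/γ^2)^2/2 + (1/γ^2)^3/6)
                = (γ/2 - 0.2075)^2 * (6*γ^6+6*γ^4+3*γ^2+1) / (6*γ^8) := by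
              field_simp
              ring
            rw [expand, le_div_iff₀ (by positivity)]
            nlinarith [key]
          have step := mul_le_mul_of_nonneg_right hA
            (inv_nonneg.mpr hPpos.le)
          rwa [mul_assoc, mul_inv_cancel₀ (ne_of_gt hPpos), mul_one] at step


lemma gr_toReal (hγ : 0 < γ) (θ : ℝ) (s : Set ℝ) :
    (gaussianReal θ ((γ^2).toNNReal) s).toReal = ∫ x in s, gaussianPDFReal θ ((γ^2).toNNReal) x := by
  rw [gaussianReal_apply_eq_integral _ (Vg_ne hγ),
    ENNReal.toReal_ofReal (integral_nonneg (fun x => gaussianPDFReal_nonneg _ _ x))]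

lemma tailIio_bounds (hγ : 0 < γ) (θ : ℝ) :
    (Real.sqrt (2*π))⁻¹ * exp (-(0.52+γ)^2/(2*γ^2))
      ≤ (gaussianReal θ ((γ^2).toNNReal) (Iio (θ - 0.52))).toReal
    ∧ 1/2 - 0.52 * (γ * Real.sqrt (2*π))⁻¹
      ≤ (gaussianReal θ ((γ^2).toNNReal) (Iio (θ - 0.52))).toReal := by
  rw [gr_toReal hγ]
  exact ⟨tail_rect hγ θ, tail_half hγ θ⟩

lemma tailIoi_bounds (hγ : 0 < γ) (θ : ℝ) :
    (Real.sqrt (2*π))⁻¹ * exp (-(0.52+γ)^2/(2*γ^2))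
      ≤ (gaussianReal θ ((γ^2).toNNReal) (Ioi (θ + 0.52))).toReal
    ∧ 1/2 - 0.52 * (γ * Real.sqrt (2*π))⁻¹
      ≤ (gaussianReal θ ((γ^2).toNNReal) (Ioi (θ + 0.52))).toReal := by
  rw [gauss_Ioi_eq_Iio θ 0.52]
  exact tailIio_bounds hγ θ

lemma appeal_case1 (θ₁ θ₂ : ℝ) (x y w : ℝ) (hx : x < θ₁ - 0.52) (hy : θ₂ + 0.52 < y)
    (h12 : θ₁ < θ₂)
    (hmin : IsLocalMin (fun w : ℝ => (1/2) * sigmoid ((w - x)^2) + (1/2) * sigmoid ((w - y)^2)) w) :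
    (1:ℝ) ≤ (if (w - θ₁)^2 < (x - θ₁)^2 then (1:ℝ) else 0)
      + (if (w - θ₂)^2 < (y - θ₂)^2 then (1:ℝ) else 0) := by
  obtain ⟨h1, h2, h3⟩ := main_det x y w (by linarith) hmin
  rcases h3 with h3 | h3
  · rw [if_pos (by nlinarith)]
    have : (0:ℝ) ≤ if (w - θ₂)^2 < (y - θ₂)^2 then (1:ℝ) else 0 := by positivity
    linarith
  · rw [if_pos (show (w - θ₂)^2 < (y - θ₂)^2 by nlinarith)]
    have : (0:ℝ) ≤ if (w - θ₁)^2 < (x - θ₁)^2 then (1:ℝ) else 0 := by positivity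
    linarith

lemma appeal_case2 (θ₁ θ₂ : ℝ) (x y w : ℝ) (hx : θ₁ + 0.52 < x) (hy : y < θ₂ - 0.52)
    (h21 : θ₂ < θ₁)
    (hmin : IsLocalMin (fun w : ℝ => (1/2) * sigmoid ((w - x)^2) + (1/2) * sigmoid ((w - y)^2)) w) :
    (1:ℝ) ≤ (if (w - θ₁)^2 < (x - θ₁)^2 then (1:ℝ) else 0)
      + (if (w - θ₂)^2 < (y - θ₂)^2 then (1:ℝ) else 0) := by
  have hmin' : IsLocalMin (fun w : ℝ => (1/2) * sigmoid ((w - y)^2) + (1/2) * sigmoid ((w - x)^2)) w := by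
    have : (fun w : ℝ => (1/2) * sigmoid ((w - y)^2) + (1/2) * sigmoid ((w - x)^2))
        = (fun w : ℝ => (1/2) * sigmoid ((w - x)^2) + (1/2) * sigmoid ((w - y)^2)) := by
      funext z; ring
    rw [this]; exact hmin
  obtain ⟨h1, h2, h3⟩ := main_det y x w (by linarith) hmin'
  rcases h3 with h3 | h3
  · rw [if_pos (show (w - θ₂)^2 < (y - θ₂)^2 by nlinarith)]
    have : (0:ℝ) ≤ if (w - θ₁)^2 < (x - θ₁)^2 then (1:ℝ) else 0 := by positivity
    linarith
  · rw [if_pos (show (w - θ₁)^2 < (x - θ₁)^2 by nlinarith)]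
    have : (0:ℝ) ≤ if (w - θ₂)^2 < (y - θ₂)^2 then (1:ℝ) else 0 := by positivity
    linarith

theorem maxfl_gm_appeal_lower_bound
    {Ω : Type*} [MeasurableSpace Ω] (μ : Measure Ω) [IsProbabilityMeasure μ]
    (θ₁ θ₂ γ : ℝ) (hne : θ₁ ≠ θ₂) (hγ : 0 < γ)
    (X Y : Ω → ℝ) (hXm : Measurable X) (hYm : Measurable Y)
    (hX : Measure.map X μ = gaussianReal θ₁ ((γ ^ 2).toNNReal))
    (hY : Measure.map Y μ = gaussianReal θ₂ ((γ ^ 2).toNNReal))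
    (hindep : IndepFun X Y μ)
    (W : ℝ × ℝ → ℝ) (hWm : Measurable W)
    (hWmin : ∀ᵐ ω ∂μ, IsLocalMin
      (fun w : ℝ => (1 / 2) * sigmoid ((w - X ω) ^ 2) + (1 / 2) * sigmoid ((w - Y ω) ^ 2))
      (W (X ω, Y ω))) :
    ∫ ω, (1 / 2 : ℝ) *
        ((if (W (X ω, Y ω) - θ₁) ^ 2 < (X ω - θ₁) ^ 2 then (1 : ℝ) else 0)
          + (if (W (X ω, Y ω) - θ₂) ^ 2 < (Y ω - θ₂) ^ 2 then (1 : ℝ) else 0)) ∂μ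
      ≥ (1 / 16) * Real.exp (-1 / γ ^ 2) := by
  classical
  obtain ⟨A, B, hA, hB, hgaussA, hgaussB, hkey⟩ :
      ∃ A B : Set ℝ, MeasurableSet A ∧ MeasurableSet B
        ∧ ((Real.sqrt (2*π))⁻¹ * Real.exp (-(0.52+γ)^2/(2*γ^2))
              ≤ (gaussianReal θ₁ ((γ^2).toNNReal) A).toReal
            ∧ 1/2 - 0.52 * (γ * Real.sqrt (2*π))⁻¹
              ≤ (gaussianReal θ₁ ((γ^2).toNNReal) A).toReal)
        ∧ ((Real.sqrt (2*π))⁻¹ * Real.exp (-(0.52+γ)^2/(2*γ^2))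
              ≤ (gaussianReal θ₂ ((γ^2).toNNReal) B).toReal
            ∧ 1/2 - 0.52 * (γ * Real.sqrt (2*π))⁻¹
              ≤ (gaussianReal θ₂ ((γ^2).toNNReal) B).toReal)
        ∧ (∀ x y w : ℝ, x ∈ A → y ∈ B →
            IsLocalMin (fun u : ℝ => (1/2) * sigmoid ((u - x)^2) + (1/2) * sigmoid ((u - y)^2)) w →
            (1:ℝ) ≤ (if (w - θ₁)^2 < (x - θ₁)^2 then (1:ℝ) else 0)
              + (if (w - θ₂)^2 < (y - θ₂)^2 then (1:ℝ) else 0)) := by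
    rcases hne.lt_or_gt with h12 | h21
    · exact ⟨Iio (θ₁ - 0.52), Ioi (θ₂ + 0.52), measurableSet_Iio, measurableSet_Ioi,
        tailIio_bounds hγ θ₁, tailIoi_bounds hγ θ₂,
        fun x y w hx hy hmin => appeal_case1 θ₁ θ₂ x y w hx hy h12 hmin⟩
    · exact ⟨Ioi (θ₁ + 0.52), Iio (θ₂ - 0.52), measurableSet_Ioi, measurableSet_Iio,
        tailIoi_bounds hγ θ₁, tailIio_bounds hγ θ₂,
        fun x y w hx hy hmin => appeal_case2 θ₁ θ₂ x y w hx hy h21 hmin⟩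
  set E : Set Ω := X ⁻¹' A ∩ Y ⁻¹' B with hEdef
  have hEmeas : MeasurableSet E := (hXm hA).inter (hYm hB)
  -- measurability of the integrand
  have hS1 : MeasurableSet {ω : Ω | (W (X ω, Y ω) - θ₁)^2 < (X ω - θ₁)^2} := by
    apply measurableSet_lt <;> fun_prop
  have hS2 : MeasurableSet {ω : Ω | (W (X ω, Y ω) - θ₂)^2 < (Y ω - θ₂)^2} := by
    apply measurableSet_lt <;> fun_prop
  have hmeas : Measurable (fun ω => (1 / 2 : ℝ) *
      ((if (W (X ω, Y ω) - θ₁) ^ 2 < (X ω - θ₁) ^ 2 then (1 : ℝ) else 0)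
        + (if (W (X ω, Y ω) - θ₂) ^ 2 < (Y ω - θ₂) ^ 2 then (1 : ℝ) else 0))) := by
    apply Measurable.const_mul
    exact (Measurable.ite hS1 measurable_const measurable_const).add
      (Measurable.ite hS2 measurable_const measurable_const)
  have hInt : Integrable (fun ω => (1 / 2 : ℝ) *
      ((if (W (X ω, Y ω) - θ₁) ^ 2 < (X ω - θ₁) ^ 2 then (1 : ℝ) else 0)
        + (if (W (X ω, Y ω) - θ₂) ^ 2 < (Y ω - θ₂) ^ 2 then (1 : ℝ) else 0))) μ := by
    apply (integrable_const (1:ℝ)).mono' hmeas.aestronglyMeasurable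
    filter_upwards with ω
    rw [Real.norm_eq_abs, abs_mul, abs_of_nonneg (by positivity :
      (0:ℝ) ≤ (if (W (X ω, Y ω) - θ₁) ^ 2 < (X ω - θ₁) ^ 2 then (1 : ℝ) else 0)
        + (if (W (X ω, Y ω) - θ₂) ^ 2 < (Y ω - θ₂) ^ 2 then (1 : ℝ) else 0))]
    have b1 : (if (W (X ω, Y ω) - θ₁) ^ 2 < (X ω - θ₁) ^ 2 then (1 : ℝ) else 0) ≤ 1 := by
      split <;> norm_num
    have b2 : (if (W (X ω, Y ω) - θ₂) ^ 2 < (Y ω - θ₂) ^ 2 then (1 : ℝ) else 0) ≤ 1 := by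
      split <;> norm_num
    rw [abs_of_nonneg (by norm_num : (0:ℝ) ≤ 1/2)]
    linarith
  have hIndInt : Integrable (E.indicator (fun _ => (1/2 : ℝ))) μ :=
    (integrable_const _).indicator hEmeas
  have hle : (E.indicator (fun _ => (1/2 : ℝ))) ≤ᵐ[μ] (fun ω => (1 / 2 : ℝ) *
      ((if (W (X ω, Y ω) - θ₁) ^ 2 < (X ω - θ₁) ^ 2 then (1 : ℝ) else 0)
        + (if (W (X ω, Y ω) - θ₂) ^ 2 < (Y ω - θ₂) ^ 2 then (1 : ℝ) else 0))) := by
    filter_upwards [hWmin] with ω hmin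
    by_cases hE : ω ∈ E
    · rw [Set.indicator_of_mem hE]
      have hmin' : IsLocalMin
          (fun u : ℝ => (1/2) * sigmoid ((u - X ω)^2) + (1/2) * sigmoid ((u - Y ω)^2))
          (W (X ω, Y ω)) := hmin
      have := hkey (X ω) (Y ω) (W (X ω, Y ω)) hE.1 hE.2 hmin'
      linarith
    · rw [Set.indicator_of_notMem hE]
      positivity
  have hmono := integral_mono_ae hIndInt hInt hle
  have hind : ∫ ω, E.indicator (fun _ => (1/2 : ℝ)) ω ∂μ = (1/2) * (μ E).toReal := by
    rw [integral_indicator_const _ hEmeas]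
    simp [mul_comm, measureReal_def]
  have hprod : μ E = (gaussianReal θ₁ ((γ^2).toNNReal) A) * (gaussianReal θ₂ ((γ^2).toNNReal) B) := by
    rw [hEdef, hindep.measure_inter_preimage_eq_mul _ _ hA hB,
      ← Measure.map_apply hXm hA, ← Measure.map_apply hYm hB, hX, hY]
  have htoReal : (μ E).toReal
      = (gaussianReal θ₁ ((γ^2).toNNReal) A).toReal * (gaussianReal θ₂ ((γ^2).toNNReal) B).toReal := by
    rw [hprod, ENNReal.toReal_mul]
  have hcomb := num_combine hγ _ _ hgaussA.1 hgaussA.2 hgaussB.1 hgaussB.2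
  rw [ge_iff_le]
  calc (1/16) * Real.exp (-1/γ^2) = (1/2) * ((1/8) * Real.exp (-1/γ^2)) := by ring
    _ ≤ (1/2) * ((gaussianReal θ₁ ((γ^2).toNNReal) A).toReal
          * (gaussianReal θ₂ ((γ^2).toNNReal) B).toReal) := by
        apply mul_le_mul_of_nonneg_left hcomb (by norm_num)
    _ = (1/2) * (μ E).toReal := by rw [htoReal]
    _ = ∫ ω, E.indicator (fun _ => (1/2 : ℝ)) ω ∂μ := hind.symm
    _ ≤ _ := hmono
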